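/- Let f : (Z/3)^4 → ℚ be any function with f(x) = f(-x) and suppose f is bounded below by -C for some C > 0. Define g(x) = f(x) + 2·E(x)·s where E(a,b,c,d) = ā + b̄ + c̄ + d̄ - (b+c)̄ (with x̄ = 1 iff x ≠ 0) and s > C/2 is rational. Then for every subgroup H of (Z/3)^4 of order 9, there exists a nonzero x ∈ H with g(x) > 0. -/
import Mathlib


noncomputable def bar (x : ZMod 3) : ℤ := if x ≠ 0 then 1 else 0

noncomputable def E (x : Fin 4 → ZMod 3) : ℤ :=
  bar (x 0) + bar (x 1) + bar (x 2) + bar (x 3) - bar (x 1 + x 2)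

lemma Bcard : (Finset.univ.filter (fun x : Fin 4 → ZMod 3 => E x ≤ 0)).card = 5 := by decide

lemma Epos : ∀ x : Fin 4 → ZMod 3, ¬ (E x ≤ 0) → 1 ≤ E x := by decide

lemma Ezero : E (0 : Fin 4 → ZMod 3) ≤ 0 := by decide

theorem stmt_4 (f : (Fin 4 → ZMod 3) → ℚ) (C : ℚ) (hC : 0 < C)
    (hsym : ∀ x, f (-x) = f x) (hbd : ∀ x, -C ≤ f x)
    (s : ℚ) (hs : C / 2 < s)
    (g : (Fin 4 → ZMod 3) → ℚ) (hg : ∀ x, g x = f x + 2 * (E x : ℚ) * s)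
    (H : AddSubgroup (Fin 4 → ZMod 3)) (hH : Nat.card H = 9) :
    ∃ x ∈ H, x ≠ 0 ∧ 0 < g x := by
  set B : Finset (Fin 4 → ZMod 3) := Finset.univ.filter (fun x => E x ≤ 0) with hB
  have hex : ∃ x ∈ (H : Set (Fin 4 → ZMod 3)), x ∉ (B : Set (Fin 4 → ZMod 3)) := by
    by_contra hcon
    push_neg at hcon
    have hsub : (H : Set (Fin 4 → ZMod 3)) ⊆ (B : Set (Fin 4 → ZMod 3)) := hcon
    have h1 : (H : Set (Fin 4 → ZMod 3)).ncard ≤ (B : Set (Fin 4 → ZMod 3)).ncard :=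
      Set.ncard_le_ncard hsub B.finite_toSet
    rw [Set.ncard_coe_finset, Bcard] at h1
    rw [← Nat.card_coe_set_eq, SetLike.coe_sort_coe] at h1
    rw [hH] at h1
    omega
  obtain ⟨x, hxH, hxB⟩ := hex
  have hE : 1 ≤ E x := by
    apply Epos
    intro h
    exact hxB (by simpa [hB] using h)
  refine ⟨x, hxH, ?_, ?_⟩
  · rintro rfl
    exact hxB (by simpa [hB] using Ezero)
  · have hs0 : 0 < s := lt_trans (by linarith) hs
    have hEq : (1 : ℚ) ≤ (E x : ℚ) := by exact_mod_cast hE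
    have h2 : (2 : ℚ) * s ≤ 2 * (E x : ℚ) * s := by nlinarith
    have := hbd x
    rw [hg x]
    linarith
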